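/- In any square group M, for any integer n the map n* : M_e → M_e defined by n*(x) = nx + C(n,2)·PH(x) (where C(n,2) = n(n-1)/2) is a group endomorphism; moreover (nm)* = n* ∘ m*, n*(P(a)) = P(n²a), and (n*x | n*y)_H = n²(x|y)_H. -/

import Mathlib

/-- Cross-effect of a map `H` into an abelian group: `(x|y)_H = H(x+y) - H x - H y`. -/
def crossEff {Me : Type*} [AddGroup Me] {Mee : Type*} [AddCommGroup Mee]
    (H : Me → Mee) (x y : Me) : Mee :=
  H (x + y) - H x - H y

/-- The axioms of a square group `M_e --H--> M_ee --P--> M_e`: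
`M_ee` abelian, `P` a homomorphism, `H` quadratic (bilinear cross-effect), and
`(Pa|y)_H = 0 = (x|Pb)_H`, `P (x|y)_H = -x-y+x+y`, `PHP = 2P`. -/
structure IsSquareGroup {Me : Type*} [AddGroup Me] {Mee : Type*} [AddCommGroup Mee]
    (P : Mee →+ Me) (H : Me → Mee) : Prop where
  cross_add_left : ∀ x x' y : Me, crossEff H (x + x') y = crossEff H x y + crossEff H x' y
  cross_add_right : ∀ x y y' : Me, crossEff H x (y + y') = crossEff H x y + crossEff H x y'
  cross_P_left : ∀ (a : Mee) (y : Me), crossEff H (P a) y = 0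
  cross_P_right : ∀ (x : Me) (b : Mee), crossEff H x (P b) = 0
  P_cross : ∀ x y : Me, P (crossEff H x y) = -x - y + x + y
  PHP : ∀ a : Mee, P (H (P a)) = P a + P a

lemma bin_even (n : ℤ) : ∃ k, n * (n - 1) = 2 * k := by
  obtain ⟨k, hk⟩ := Int.even_mul_succ_self (n - 1)
  exact ⟨k, by linear_combination hk⟩

lemma bin_succ (n : ℤ) : (n + 1) * ((n + 1) - 1) / 2 = n * (n - 1) / 2 + n := by
  obtain ⟨k, hk⟩ := bin_even n
  have h2 : (n + 1) * ((n + 1) - 1) = 2 * (k + n) := by linear_combination hk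
  rw [h2, hk, Int.mul_ediv_cancel_left _ two_ne_zero, Int.mul_ediv_cancel_left _ two_ne_zero]

lemma bin_pred (n : ℤ) : (n - 1) * ((n - 1) - 1) / 2 = n * (n - 1) / 2 + (1 - n) := by
  obtain ⟨k, hk⟩ := bin_even n
  have h2 : (n - 1) * ((n - 1) - 1) = 2 * (k + (1 - n)) := by linear_combination hk
  rw [h2, hk, Int.mul_ediv_cancel_left _ two_ne_zero, Int.mul_ediv_cancel_left _ two_ne_zero]

lemma bin_two (n : ℤ) : 2 * (n * (n - 1) / 2) = n * n - n := by
  obtain ⟨k, hk⟩ := bin_even n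
  rw [hk, Int.mul_ediv_cancel_left _ two_ne_zero]
  linear_combination -hk

lemma bin_mul (n m : ℤ) :
    (n * m) * ((n * m) - 1) / 2 = (n * (n - 1) / 2) * m + n ^ 2 * (m * (m - 1) / 2) := by
  obtain ⟨a, ha⟩ := bin_even n
  obtain ⟨b, hb⟩ := bin_even m
  have h2 : (n * m) * ((n * m) - 1) = 2 * (a * m + n ^ 2 * b) := by
    linear_combination m * ha + n ^ 2 * hb
  rw [h2, ha, hb, Int.mul_ediv_cancel_left _ two_ne_zero,
    Int.mul_ediv_cancel_left _ two_ne_zero, Int.mul_ediv_cancel_left _ two_ne_zero]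


section SG
variable {Me : Type*} [AddGroup Me] {Mee : Type*} [AddCommGroup Mee]
    {P : Mee →+ Me} {H : Me → Mee} (hsq : IsSquareGroup P H)
include hsq

/-- image of P is central -/
lemma sg_Pcen (b : Mee) (z : Me) : P b + z = z + P b := by
  have h := hsq.P_cross (P b) z
  rw [hsq.cross_P_left, map_zero] at h
  have h2 : z + P b + (0:Me) = z + P b + (-P b - z + P b + z) := by rw [← h]
  simpa [sub_eq_add_neg, add_assoc] using h2.symm

lemma sg_swap (u v : Me) : v + u = u + v + P (crossEff H v u) := by
  rw [hsq.P_cross]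
  simp [sub_eq_add_neg, add_assoc]

lemma sg_c0l (y : Me) : crossEff H 0 y = 0 := by
  have h := hsq.cross_add_left 0 0 y
  rw [add_zero] at h
  exact (left_eq_add.mp h)

lemma sg_c0r (x : Me) : crossEff H x 0 = 0 := by
  have h := hsq.cross_add_right x 0 0
  rw [add_zero] at h
  exact (left_eq_add.mp h)

lemma sg_cnegl (x y : Me) : crossEff H (-x) y = - crossEff H x y := by
  have h := hsq.cross_add_left x (-x) y
  rw [add_neg_cancel, sg_c0l hsq] at h
  exact (neg_eq_of_add_eq_zero_right h.symm).symm

lemma sg_cnegr (x y : Me) : crossEff H x (-y) = - crossEff H x y := by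
  have h := hsq.cross_add_right x y (-y)
  rw [add_neg_cancel, sg_c0r hsq] at h
  exact (neg_eq_of_add_eq_zero_right h.symm).symm

lemma sg_czl (n : ℤ) (x y : Me) : crossEff H (n • x) y = n • crossEff H x y := by
  induction n using Int.induction_on with
  | zero => simp [sg_c0l hsq]
  | succ i ih =>
      rw [add_zsmul, one_zsmul, hsq.cross_add_left, ih, add_zsmul, one_zsmul]
  | pred i ih =>
      rw [show (-(i:ℤ) - 1) • x = (-(i:ℤ)) • x + -x by rw [sub_zsmul, one_zsmul],
        hsq.cross_add_left, ih, sg_cnegl hsq, sub_zsmul, one_zsmul]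

lemma sg_H0 : H (0 : Me) = 0 := by
  have h := sg_c0l hsq (0 : Me)
  simp [crossEff] at h
  simpa using h

omit hsq in
lemma sg_Hadd (x y : Me) : H (x + y) = crossEff H x y + H x + H y := by
  simp only [crossEff]
  abel

lemma sg_Pcxx (x : Me) : P (crossEff H x x) = 0 := by
  rw [hsq.P_cross]
  simp [sub_eq_add_neg, add_assoc]

lemma sg_Pcxnegx (x : Me) : P (crossEff H x (-x)) = 0 := by
  rw [hsq.P_cross]
  simp [sub_eq_add_neg, add_assoc]

lemma sg_PHneg (x : Me) : P (H (-x)) = - P (H x) := by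
  have h : H (-x) = H 0 - H x - crossEff H x (-x) := by
    rw [crossEff, add_neg_cancel]; abel
  rw [h, map_sub, map_sub, sg_H0 hsq, map_zero, sg_Pcxnegx hsq]
  simp

lemma sg_PHzsmul (n : ℤ) (x : Me) : P (H (n • x)) = n • P (H x) := by
  induction n using Int.induction_on with
  | zero => simp [sg_H0 hsq]
  | succ i ih =>
      rw [add_zsmul, one_zsmul, sg_Hadd (H := H), map_add, map_add, ih, sg_czl hsq,
        map_zsmul, sg_Pcxx hsq]
      simp [add_zsmul]
  | pred i ih =>
      rw [show (-(i:ℤ) - 1) • x = (-(i:ℤ)) • x + -x by rw [sub_zsmul, one_zsmul],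
        sg_Hadd (H := H), map_add, map_add, ih, sg_czl hsq, map_zsmul, sg_Pcxnegx hsq,
        sg_PHneg hsq]
      simp [sub_zsmul]

lemma sg_Pcen' (b : Mee) (z w : Me) : P b + (z + w) = z + (P b + w) := by
  rw [← add_assoc, sg_Pcen hsq, add_assoc]

lemma sg_swap' (u v r : Me) : v + (u + r) = u + (v + (P (crossEff H v u) + r)) := by
  rw [← add_assoc, sg_swap hsq u v, add_assoc, add_assoc]

lemma sg_czr (n : ℤ) (x y : Me) : crossEff H x (n • y) = n • crossEff H x y := by
  induction n using Int.induction_on with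
  | zero => simp [sg_c0r hsq]
  | succ i ih =>
      rw [add_zsmul, one_zsmul, hsq.cross_add_right, ih, add_zsmul, one_zsmul]
  | pred i ih =>
      rw [show (-(i:ℤ) - 1) • y = (-(i:ℤ)) • y + -y by rw [sub_zsmul, one_zsmul],
        hsq.cross_add_right, ih, sg_cnegr hsq, sub_zsmul, one_zsmul]

lemma sg_Pcc (x y : Me) : P (crossEff H y x + crossEff H x y) = 0 := by
  rw [map_add, hsq.P_cross, hsq.P_cross]
  simp [sub_eq_add_neg, add_assoc]


lemma sg_Pmain (k : ℤ) (x y : Me) :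
    P (k • crossEff H y x + k • (crossEff H x y + (H x + H y))) = P (k • H x + k • H y) := by
  have h1 : k • crossEff H y x + k • (crossEff H x y + (H x + H y))
      = k • (crossEff H y x + crossEff H x y) + (k • H x + k • H y) := by
    simp only [smul_add]; abel
  rw [h1, map_add, map_zsmul, sg_Pcc hsq, smul_zero, zero_add]

lemma sg_zsmul_add (n : ℤ) (x y : Me) :
    n • (x + y) = n • x + (n • y + P ((n * (n - 1) / 2) • crossEff H y x)) := by
  induction n using Int.induction_on with
  | zero => norm_num
  | succ i ih =>
      rw [bin_succ]
      simp only [add_zsmul, one_zsmul]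
      rw [ih, map_add]
      simp only [add_assoc]
      conv_lhs => rw [sg_Pcen' hsq, sg_Pcen hsq, sg_swap' hsq x ((i:ℤ) • y),
        sg_czl hsq, sg_Pcen' hsq]
      rw [← map_add, ← map_add,
        add_comm ((i:ℤ) • crossEff H y x) (((i:ℤ) * ((i:ℤ) - 1) / 2) • crossEff H y x)]
  | pred i ih =>
      rw [bin_pred]
      simp only [sub_zsmul, add_zsmul, one_zsmul]
      rw [ih, map_add]
      simp only [sub_eq_add_neg, neg_add_rev, add_assoc]
      conv_lhs => rw [sg_Pcen' hsq, sg_Pcen hsq, sg_swap' hsq (-x) (-y),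
        sg_cnegl hsq, sg_cnegr hsq, neg_neg, sg_swap' hsq (-x) ((-(i:ℤ)) • y),
        sg_czl hsq, sg_cnegr hsq, sg_Pcen' hsq]
      rw [← map_add, ← map_add, ← map_add, smul_neg]
      congr 1
      congr 1
      congr 1
      congr 1
      congr 1
      abel

end SG


/-- In any square group, for `n : ℤ` the map `n*(x) = n • x + C(n,2) • PH(x)` is an
endomorphism of `M_e`, `(nm)* = n* ∘ m*`, `n*(P a) = P (n² • a)`, and
`(n*x | n*y)_H = n² • (x|y)_H`. -/
theorem squareGroup_nstar {Me : Type*} [AddGroup Me] {Mee : Type*} [AddCommGroup Mee]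
    (P : Mee →+ Me) (H : Me → Mee) (hsq : IsSquareGroup P H)
    (nstar : ℤ → Me → Me)
    (hnstar : ∀ (n : ℤ) (x : Me), nstar n x = n • x + (n * (n - 1) / 2) • P (H x)) :
    (∀ (n : ℤ) (x y : Me), nstar n (x + y) = nstar n x + nstar n y) ∧
    (∀ (n m : ℤ) (x : Me), nstar (n * m) x = nstar n (nstar m x)) ∧
    (∀ (n : ℤ) (a : Mee), nstar n (P a) = P (n ^ 2 • a)) ∧
    (∀ (n : ℤ) (x y : Me), crossEff H (nstar n x) (nstar n y) = n ^ 2 • crossEff H x y) := by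
  have key1 : ∀ (n : ℤ) (x y : Me), nstar n (x + y) = nstar n x + nstar n y := by
    intro n x y
    rw [hnstar, hnstar, hnstar, ← map_zsmul P, ← map_zsmul P, ← map_zsmul P,
      sg_zsmul_add hsq, sg_Hadd (H := H)]
    simp only [add_assoc]
    conv_rhs => rw [sg_Pcen' hsq]
    rw [← map_add, ← map_add, sg_Pmain hsq]
  have key3 : ∀ (n : ℤ) (a : Mee), nstar n (P a) = P (n ^ 2 • a) := by
    intro n a
    rw [hnstar, hsq.PHP, ← map_add, ← map_zsmul P, ← map_zsmul P, ← map_add]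
    congr 1
    rw [smul_add, ← add_zsmul, ← add_zsmul]
    congr 1
    rw [pow_two]
    linarith [bin_two n]
  have key4 : ∀ (n : ℤ) (x y : Me),
      crossEff H (nstar n x) (nstar n y) = n ^ 2 • crossEff H x y := by
    intro n x y
    rw [hnstar, hnstar, ← map_zsmul P, ← map_zsmul P, hsq.cross_add_left,
      hsq.cross_P_left, hsq.cross_add_right, hsq.cross_P_right, add_zero, add_zero,
      sg_czl hsq, sg_czr hsq, smul_smul, pow_two]
  have key2 : ∀ (n m : ℤ) (x : Me), nstar (n * m) x = nstar n (nstar m x) := by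
    intro n m x
    rw [hnstar m x, key1 n (m • x) ((m * (m - 1) / 2) • P (H x)),
      ← map_zsmul P (m * (m - 1) / 2) (H x), key3 n ((m * (m - 1) / 2) • H x),
      hnstar n (m • x), sg_PHzsmul hsq, hnstar (n * m) x,
      smul_smul ((n:ℤ) ^ 2) (m * (m - 1) / 2), map_zsmul,
      ← mul_zsmul, ← mul_zsmul, add_assoc, ← add_zsmul, bin_mul]
  exact ⟨key1, key2, key3, key4⟩
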